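/- Orlicz chord Brunn-Minkowski inequality: if K, L are star bodies in R^n, 0 ≤ i < n, and φ ∈ Φ₂, then 1 ≥ φ((B_i(K)/B_i(K +̌_φ L))^{1/(n-i)}, (B_i(L)/B_i(K +̌_φ L))^{1/(n-i)}). If φ is strictly convex, equality holds if and only if K and L have similar chord. -/

import Mathlib

open MeasureTheory Metric Filter Set

noncomputable section

/-- A star body in `ℝⁿ`: a compact set, star-shaped about the origin, whose radial
function (recorded on the unit sphere) is positive and continuous. -/
structure StarBody (n : ℕ) where
  carrier : Set (EuclideanSpace ℝ (Fin n))
  radial : sphere (0 : EuclideanSpace ℝ (Fin n)) 1 → ℝ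
  radial_pos : ∀ u, 0 < radial u
  radial_continuous : Continuous radial
  isCompact : IsCompact carrier
  mem_iff : ∀ x, x ∈ carrier ↔ x = 0 ∨
    ∃ (u : sphere (0 : EuclideanSpace ℝ (Fin n)) 1) (c : ℝ),
      0 ≤ c ∧ c ≤ radial u ∧ x = c • (u : EuclideanSpace ℝ (Fin n))

/-- The half chord `d(K,u) = (ρ(K,u) + ρ(K,-u))/2` of a star body in direction `u`. -/
def StarBody.chord {n : ℕ} (K : StarBody n) (u : sphere (0 : EuclideanSpace ℝ (Fin n)) 1) : ℝ :=
  (K.radial u + K.radial (-u)) / 2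

/-- Spherical (surface-type) measure on the unit sphere of `ℝⁿ`. -/
def sphereMeasure (n : ℕ) : Measure (sphere (0 : EuclideanSpace ℝ (Fin n)) 1) :=
  (volume : Measure (EuclideanSpace ℝ (Fin n))).toSphere

/-- The chord integral `B_i(K) = (1/n) ∫_{S^{n-1}} d(K,u)^{n-i} dS(u)`. -/
def chordIntegral (n i : ℕ) (K : StarBody n) : ℝ :=
  (1 / (n : ℝ)) * ∫ u, K.chord u ^ ((n : ℝ) - i) ∂(sphereMeasure n)

/-- `K` and `L` have similar chord: `d(K,·) = λ d(L,·)` for some `λ > 0`. -/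
def SimilarChord {n : ℕ} (K L : StarBody n) : Prop :=
  ∃ lam : ℝ, 0 < lam ∧ ∀ u, K.chord u = lam * L.chord u

/-- The class `Φ₂`: convex functions `φ : [0,∞)² → (0,∞]`, strictly decreasing in each
variable, with `φ(0,0) = ∞` (encoded as a blow-up at `(0,0)`) and
`φ(∞,1) = φ(1,∞) = 1` (encoded as limits). -/
structure OrliczPhi2 where
  toFun : ℝ → ℝ → ℝ
  pos : ∀ x > (0 : ℝ), ∀ y > (0 : ℝ), 0 < toFun x y
  convexOn : ConvexOn ℝ ((Set.Ioi 0) ×ˢ (Set.Ioi (0 : ℝ)))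
    (fun p : ℝ × ℝ => toFun p.1 p.2)
  strictAnti_left : ∀ y > (0 : ℝ), StrictAntiOn (fun x => toFun x y) (Set.Ioi 0)
  strictAnti_right : ∀ x > (0 : ℝ), StrictAntiOn (fun y => toFun x y) (Set.Ioi 0)
  tendsto_zero : Tendsto (fun p : ℝ × ℝ => toFun p.1 p.2)
    (nhdsWithin (0, 0) ((Set.Ioi 0) ×ˢ (Set.Ioi 0))) atTop
  tendsto_one_left : Tendsto (fun t => toFun t 1) atTop (nhds 1)
  tendsto_one_right : Tendsto (fun t => toFun 1 t) atTop (nhds 1)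


section Aux

open scoped NNReal ENNReal

open Pointwise in
lemma sphereMeasure_isOpenPosMeasure (n : ℕ) (hn : 0 < n) :
    (sphereMeasure n).IsOpenPosMeasure := by
  constructor
  intro U hU hne
  rw [sphereMeasure, Measure.toSphere_apply' _ hU.measurableSet]
  set E := EuclideanSpace ℝ (Fin n) with hE
  obtain ⟨V, hV, hVU⟩ :=
    (Topology.IsInducing.subtypeVal (t := sphere (0 : E) 1)).isOpen_iff.mp hU
  set W : Set E := {0}ᶜ ∩ ball (0 : E) 1 with hW
  have hWopen : IsOpen W := (isOpen_compl_singleton).inter isOpen_ball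
  have hgcont : ContinuousOn (fun x : E => ‖x‖⁻¹ • x) W := by
    refine ContinuousOn.smul (f := fun x : E => ‖x‖⁻¹) (g := fun x : E => x) ?_ continuousOn_id
    exact (continuous_norm.continuousOn).inv₀ fun x hx => norm_ne_zero_iff.2 hx.1
  set T : Set E := W ∩ (fun x : E => ‖x‖⁻¹ • x) ⁻¹' V with hT
  have hTopen : IsOpen T := hgcont.isOpen_inter_preimage hWopen hV
  have hTsub : T ⊆ Ioo (0:ℝ) 1 • (Subtype.val '' U) := by
    rintro x ⟨⟨hx0, hx1⟩, hxV⟩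
    have hx0' : x ≠ 0 := hx0
    have hnx : 0 < ‖x‖ := norm_pos_iff.2 hx0'
    have hy : ‖(‖x‖⁻¹ • x)‖ = 1 := by
      rw [norm_smul, norm_inv, norm_norm, inv_mul_cancel₀ hnx.ne']
    refine Set.mem_smul.2 ⟨‖x‖, ?_, ‖x‖⁻¹ • x, ?_, ?_⟩
    · exact ⟨hnx, by simpa [dist_eq_norm] using hx1⟩
    · refine ⟨⟨‖x‖⁻¹ • x, by simpa [mem_sphere_iff_norm] using hy⟩, ?_, rfl⟩
      rw [← hVU]; exact hxV
    · rw [smul_smul, mul_inv_cancel₀ hnx.ne', one_smul]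
  have hTne : T.Nonempty := by
    obtain ⟨u, hu⟩ := hne
    have hnu : ‖(2⁻¹ : ℝ) • (u : E)‖ = 2⁻¹ := by
      rw [norm_smul]; simp [mem_sphere_iff_norm.1 u.2]
    refine ⟨(2⁻¹ : ℝ) • (u : E), ⟨?_, ?_⟩, ?_⟩
    · simp only [mem_compl_iff, mem_singleton_iff]
      intro h
      rw [h] at hnu; simp at hnu
    · rw [mem_ball, dist_eq_norm, sub_zero, hnu]; norm_num
    · simp only [Set.mem_preimage, hnu]
      rw [smul_smul]
      norm_num
      rw [← hVU] at hu
      simpa using hu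
  have hpos : 0 < volume T := hTopen.measure_pos volume hTne
  have hpos2 : volume (Ioo (0:ℝ) 1 • (Subtype.val '' U)) ≠ 0 :=
    (lt_of_lt_of_le hpos (measure_mono hTsub)).ne'
  refine mul_ne_zero ?_ hpos2
  simp [finrank_euclideanSpace_fin, hn.ne']

end Aux

open scoped NNReal ENNReal

/-- Orlicz chord Brunn–Minkowski inequality: with `M = K +̌_φ L`,
`1 ≥ φ((B_i(K)/B_i(M))^{1/(n−i)}, (B_i(L)/B_i(M))^{1/(n−i)})`, with equality (for
strictly convex `φ`) iff `K` and `L` have similar chord. -/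
theorem orlicz_chord_brunn_minkowski {n i : ℕ} (hi : i < n) (φ : OrliczPhi2)
    (K L M : StarBody n)
    (hM : ∀ u, φ.toFun (K.chord u / M.chord u) (L.chord u / M.chord u) = 1) :
    1 ≥ φ.toFun ((chordIntegral n i K / chordIntegral n i M) ^ (1 / ((n : ℝ) - i)))
        ((chordIntegral n i L / chordIntegral n i M) ^ (1 / ((n : ℝ) - i))) ∧
    (StrictConvexOn ℝ ((Set.Ioi 0) ×ˢ (Set.Ioi (0 : ℝ)))
        (fun p : ℝ × ℝ => φ.toFun p.1 p.2) →
      ((1 : ℝ) = φ.toFun ((chordIntegral n i K / chordIntegral n i M) ^ (1 / ((n : ℝ) - i)))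
          ((chordIntegral n i L / chordIntegral n i M) ^ (1 / ((n : ℝ) - i))) ↔
        SimilarChord K L)) := by
  classical
  have hn : 0 < n := lt_of_le_of_lt (Nat.zero_le i) hi
  have hp1 : (1:ℝ) ≤ (n:ℝ) - i := by
    have h : (i:ℝ) + 1 ≤ (n:ℝ) := by exact_mod_cast hi
    linarith
  have hp0 : (0:ℝ) < (n:ℝ) - i := lt_of_lt_of_le one_pos hp1
  set p : ℝ := (n:ℝ) - i with hpdef
  haveI : Nontrivial (EuclideanSpace ℝ (Fin n)) :=
    Module.nontrivial_of_finrank_pos (R := ℝ) (by rw [finrank_euclideanSpace_fin]; exact hn)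
  haveI : Nonempty (sphere (0 : EuclideanSpace ℝ (Fin n)) 1) :=
    (NormedSpace.sphere_nonempty.mpr zero_le_one).to_subtype
  set μ := sphereMeasure n with hμdef
  haveI hμfin : IsFiniteMeasure μ := by rw [hμdef, sphereMeasure]; infer_instance
  haveI hμop : μ.IsOpenPosMeasure := sphereMeasure_isOpenPosMeasure n hn
  have hμne : μ ≠ 0 :=
    Measure.measure_univ_ne_zero.mp (isOpen_univ.measure_ne_zero μ Set.univ_nonempty)
  haveI : NeZero μ := ⟨hμne⟩
  -- continuity and positivity of chords
  have hnegc : Continuous (fun u : sphere (0 : EuclideanSpace ℝ (Fin n)) 1 => -u) :=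
    continuous_neg
  have hchordc : ∀ Q : StarBody n, Continuous Q.chord := by
    intro Q
    exact (Q.radial_continuous.add (Q.radial_continuous.comp hnegc)).div_const 2
  have hchordpos : ∀ (Q : StarBody n) u, 0 < Q.chord u := by
    intro Q u
    have h1 := Q.radial_pos u
    have h2 := Q.radial_pos (-u)
    unfold StarBody.chord
    positivity
  -- integrability of continuous functions
  have integ : ∀ (m : Measure (sphere (0 : EuclideanSpace ℝ (Fin n)) 1))
      [IsFiniteMeasure m] {G : Type} [NormedAddCommGroup G]
      (g : (sphere (0 : EuclideanSpace ℝ (Fin n)) 1) → G), Continuous g → Integrable g m := by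
    intro m _ G _ g hg
    exact hg.integrable_of_hasCompactSupport
      (isCompact_univ.of_isClosed_subset (isClosed_tsupport g) (Set.subset_univ _))
  have intpos : ∀ g : (sphere (0 : EuclideanSpace ℝ (Fin n)) 1) → ℝ, Continuous g →
      (∀ u, 0 < g u) → 0 < ∫ u, g u ∂μ := by
    intro g hc hpos
    rw [integral_pos_iff_support_of_nonneg (fun u => (hpos u).le) (integ μ g hc)]
    have hs : Function.support g = Set.univ := Set.eq_univ_of_forall fun u => (hpos u).ne'
    rw [hs]
    exact Measure.measure_univ_pos.mpr hμne
  -- the chord integrals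
  set IK := ∫ u, K.chord u ^ p ∂μ with hIKdef
  set IL := ∫ u, L.chord u ^ p ∂μ with hILdef
  set IM := ∫ u, M.chord u ^ p ∂μ with hIMdef
  have hrpc : ∀ Q : StarBody n, Continuous (fun u => Q.chord u ^ p) := by
    intro Q
    exact (hchordc Q).rpow_const fun u => Or.inl (hchordpos Q u).ne'
  have hIKpos : 0 < IK := intpos _ (hrpc K) fun u => Real.rpow_pos_of_pos (hchordpos K u) p
  have hILpos : 0 < IL := intpos _ (hrpc L) fun u => Real.rpow_pos_of_pos (hchordpos L u) p
  have hIMpos : 0 < IM := intpos _ (hrpc M) fun u => Real.rpow_pos_of_pos (hchordpos M u) p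
  have hratioK : chordIntegral n i K / chordIntegral n i M = IK / IM := by
    unfold chordIntegral
    rw [← hμdef, ← hpdef, ← hIKdef, ← hIMdef, mul_div_mul_left]
    exact one_div_ne_zero (by exact_mod_cast hn.ne')
  have hratioL : chordIntegral n i L / chordIntegral n i M = IL / IM := by
    unfold chordIntegral
    rw [← hμdef, ← hpdef, ← hILdef, ← hIMdef, mul_div_mul_left]
    exact one_div_ne_zero (by exact_mod_cast hn.ne')
  rw [hratioK, hratioL]
  -- the weighted measure
  set w : (sphere (0 : EuclideanSpace ℝ (Fin n)) 1) → ℝ := fun u => M.chord u ^ p with hwdef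
  have hwc : Continuous w := hrpc M
  have hwpos : ∀ u, 0 < w u := fun u => Real.rpow_pos_of_pos (hchordpos M u) p
  have hwmeas : Measurable fun u => Real.toNNReal (w u) :=
    measurable_real_toNNReal.comp hwc.measurable
  set ν := μ.withDensity (fun u => ((Real.toNNReal (w u) : ℝ≥0) : ℝ≥0∞)) with hνdef
  have hνint : ∀ {G : Type} [NormedAddCommGroup G] [NormedSpace ℝ G]
      (g : (sphere (0 : EuclideanSpace ℝ (Fin n)) 1) → G),
      ∫ x, g x ∂ν = ∫ u, w u • g u ∂μ := by
    intro G _ _ g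
    rw [hνdef, integral_withDensity_eq_integral_smul hwmeas g]
    congr 1
    funext u
    rw [NNReal.smul_def, Real.coe_toNNReal _ (hwpos u).le]
  have hνuniv : ν Set.univ = ENNReal.ofReal IM := by
    rw [hνdef, withDensity_apply _ MeasurableSet.univ, Measure.restrict_univ]
    have hcoe : ∀ a, ((Real.toNNReal (w a) : ℝ≥0) : ℝ≥0∞) = ENNReal.ofReal (w a) :=
      fun a => rfl
    simp_rw [hcoe]
    rw [← ofReal_integral_eq_lintegral_ofReal (integ μ w hwc)
      (Filter.Eventually.of_forall fun u => (hwpos u).le)]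
  haveI hνfin : IsFiniteMeasure ν := ⟨by rw [hνuniv]; exact ENNReal.ofReal_lt_top⟩
  haveI hνne : NeZero ν := ⟨by
    rw [← Measure.measure_univ_ne_zero, hνuniv]
    simp [ENNReal.ofReal_eq_zero, not_le, hIMpos]⟩
  have hνunivReal : (ν Set.univ).toReal = IM := by
    rw [hνuniv, ENNReal.toReal_ofReal hIMpos.le]
  have havg : ∀ g : (sphere (0 : EuclideanSpace ℝ (Fin n)) 1) → ℝ,
      ⨍ x, g x ∂ν = (∫ u, w u * g u ∂μ) / IM := by
    intro g
    rw [average_eq, hνint g, measureReal_def, hνunivReal, smul_eq_mul, inv_mul_eq_div]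
    simp only [smul_eq_mul]
  -- the ratio functions
  set f1 : (sphere (0 : EuclideanSpace ℝ (Fin n)) 1) → ℝ :=
    fun u => K.chord u / M.chord u with hf1def
  set f2 : (sphere (0 : EuclideanSpace ℝ (Fin n)) 1) → ℝ :=
    fun u => L.chord u / M.chord u with hf2def
  have hf1c : Continuous f1 := (hchordc K).div (hchordc M) fun u => (hchordpos M u).ne'
  have hf2c : Continuous f2 := (hchordc L).div (hchordc M) fun u => (hchordpos M u).ne'
  have hf1pos : ∀ u, 0 < f1 u := fun u => div_pos (hchordpos K u) (hchordpos M u)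
  have hf2pos : ∀ u, 0 < f2 u := fun u => div_pos (hchordpos L u) (hchordpos M u)
  set mK := ⨍ x, f1 x ∂ν with hmKdef
  set mL := ⨍ x, f2 x ∂ν with hmLdef
  have hmKpos : 0 < mK := by
    rw [hmKdef, havg f1]
    exact div_pos (intpos _ (hwc.mul hf1c) fun u => mul_pos (hwpos u) (hf1pos u)) hIMpos
  have hmLpos : 0 < mL := by
    rw [hmLdef, havg f2]
    exact div_pos (intpos _ (hwc.mul hf2c) fun u => mul_pos (hwpos u) (hf2pos u)) hIMpos
  -- power-mean (Jensen for t ^ p)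
  have hrpowContOn : ContinuousOn (fun x : ℝ => x ^ p) (Set.Ici 0) := fun x _ =>
    (Real.continuousAt_rpow_const x p (Or.inr (lt_of_lt_of_le one_pos hp1).le)).continuousWithinAt
  have hpowJ : ∀ g : (sphere (0 : EuclideanSpace ℝ (Fin n)) 1) → ℝ, Continuous g →
      (∀ u, 0 < g u) → (⨍ x, g x ∂ν) ^ p ≤ ⨍ x, g x ^ p ∂ν := by
    intro g hc hpos
    have := (convexOn_rpow hp1).map_average_le hrpowContOn isClosed_Ici
      (Filter.Eventually.of_forall fun u => (hpos u).le) (integ ν g hc)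
      (integ ν _ ((hc.rpow_const fun u => Or.inl (hpos u).ne') :
        Continuous fun u => g u ^ p))
    exact this
  have hwf1 : ∫ u, w u * f1 u ^ p ∂μ = IK := by
    rw [hIKdef]
    congr 1
    funext u
    rw [hwdef, hf1def]
    have : (K.chord u / M.chord u) ^ p = K.chord u ^ p / M.chord u ^ p :=
      Real.div_rpow (hchordpos K u).le (hchordpos M u).le p
    rw [this, mul_div_cancel₀]
    exact (Real.rpow_pos_of_pos (hchordpos M u) p).ne'
  have hwf2 : ∫ u, w u * f2 u ^ p ∂μ = IL := by
    rw [hILdef]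
    congr 1
    funext u
    rw [hwdef, hf2def]
    have : (L.chord u / M.chord u) ^ p = L.chord u ^ p / M.chord u ^ p :=
      Real.div_rpow (hchordpos L u).le (hchordpos M u).le p
    rw [this, mul_div_cancel₀]
    exact (Real.rpow_pos_of_pos (hchordpos M u) p).ne'
  have hJK : mK ^ p ≤ IK / IM := by
    have h := hpowJ f1 hf1c hf1pos
    rwa [havg (fun u => f1 u ^ p), hwf1, ← hmKdef] at h
  have hJL : mL ^ p ≤ IL / IM := by
    have h := hpowJ f2 hf2c hf2pos
    rwa [havg (fun u => f2 u ^ p), hwf2, ← hmLdef] at h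
  set rK : ℝ := (IK / IM) ^ (1 / p) with hrKdef
  set rL : ℝ := (IL / IM) ^ (1 / p) with hrLdef
  have hrKpos : 0 < rK := Real.rpow_pos_of_pos (div_pos hIKpos hIMpos) _
  have hrLpos : 0 < rL := Real.rpow_pos_of_pos (div_pos hILpos hIMpos) _
  have hmKrK : mK ≤ rK := by
    have h1 : mK = (mK ^ p) ^ (1 / p) := by
      rw [one_div, Real.rpow_rpow_inv hmKpos.le hp0.ne']
    rw [h1, hrKdef]
    exact Real.rpow_le_rpow (Real.rpow_nonneg hmKpos.le p) hJK (by positivity)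
  have hmLrL : mL ≤ rL := by
    have h1 : mL = (mL ^ p) ^ (1 / p) := by
      rw [one_div, Real.rpow_rpow_inv hmLpos.le hp0.ne']
    rw [h1, hrLdef]
    exact Real.rpow_le_rpow (Real.rpow_nonneg hmLpos.le p) hJL (by positivity)
  -- Jensen for φ
  set f : (sphere (0 : EuclideanSpace ℝ (Fin n)) 1) → ℝ × ℝ := fun u => (f1 u, f2 u) with hfdef
  have hfc : Continuous f := hf1c.prodMk hf2c
  obtain ⟨u1, -, hu1⟩ := isCompact_univ.exists_isMinOn (f := f1) Set.univ_nonempty hf1c.continuousOn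
  obtain ⟨v1, -, hv1⟩ := isCompact_univ.exists_isMaxOn (f := f1) Set.univ_nonempty hf1c.continuousOn
  obtain ⟨u2, -, hu2⟩ := isCompact_univ.exists_isMinOn (f := f2) Set.univ_nonempty hf2c.continuousOn
  obtain ⟨v2, -, hv2⟩ := isCompact_univ.exists_isMaxOn (f := f2) Set.univ_nonempty hf2c.continuousOn
  set R : Set (ℝ × ℝ) := Set.Icc (f1 u1) (f1 v1) ×ˢ Set.Icc (f2 u2) (f2 v2) with hRdef
  have hRclosed : IsClosed R := isClosed_Icc.prod isClosed_Icc
  have hRconv : Convex ℝ R := (convex_Icc _ _).prod (convex_Icc _ _)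
  have hRsubQ : R ⊆ (Set.Ioi 0) ×ˢ (Set.Ioi (0:ℝ)) := by
    rintro ⟨x, y⟩ ⟨hx, hy⟩
    exact ⟨lt_of_lt_of_le (hf1pos u1) hx.1, lt_of_lt_of_le (hf2pos u2) hy.1⟩
  have hfR : ∀ u, f u ∈ R := fun u =>
    ⟨⟨isMinOn_iff.mp hu1 u (Set.mem_univ u), isMaxOn_iff.mp hv1 u (Set.mem_univ u)⟩,
     ⟨isMinOn_iff.mp hu2 u (Set.mem_univ u), isMaxOn_iff.mp hv2 u (Set.mem_univ u)⟩⟩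
  have hΦcontQ : ContinuousOn (fun q : ℝ × ℝ => φ.toFun q.1 q.2)
      ((Set.Ioi 0) ×ˢ (Set.Ioi (0:ℝ))) :=
    φ.convexOn.continuousOn (isOpen_Ioi.prod isOpen_Ioi)
  have hΦcontR : ContinuousOn (fun q : ℝ × ℝ => φ.toFun q.1 q.2) R := hΦcontQ.mono hRsubQ
  have hΦconvR : ConvexOn ℝ R (fun q : ℝ × ℝ => φ.toFun q.1 q.2) :=
    φ.convexOn.subset hRsubQ hRconv
  have hΦf : ((fun q : ℝ × ℝ => φ.toFun q.1 q.2) ∘ f) = fun _ => (1:ℝ) :=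
    funext fun u => hM u
  have hfint : Integrable f ν := integ ν f hfc
  have hΦfint : Integrable ((fun q : ℝ × ℝ => φ.toFun q.1 q.2) ∘ f) ν := by
    rw [hΦf]; exact integrable_const 1
  have hpairavg : ⨍ x, f x ∂ν = (mK, mL) :=
    average_pair (integ ν f1 hf1c) (integ ν f2 hf2c)
  have havgΦ : ⨍ x, φ.toFun (f x).1 (f x).2 ∂ν = 1 := by
    have : (fun x => φ.toFun (f x).1 (f x).2) = fun _ => (1:ℝ) := funext fun u => hM u
    rw [this]; exact average_const ν 1
  have hJ1 : φ.toFun mK mL ≤ 1 := by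
    have h := hΦconvR.map_average_le hΦcontR hRclosed
      (Filter.Eventually.of_forall hfR) hfint hΦfint
    rw [hpairavg] at h
    exact le_trans h (le_of_eq havgΦ)
  -- monotonicity chain
  have antiL : ∀ {a b y : ℝ}, 0 < a → a ≤ b → 0 < y → φ.toFun b y ≤ φ.toFun a y := by
    intro a b y ha hab hy
    rcases eq_or_lt_of_le hab with h | h
    · rw [h]
    · exact (φ.strictAnti_left y hy ha (ha.trans h) h).le
  have antiR : ∀ {x a b : ℝ}, 0 < x → 0 < a → a ≤ b → φ.toFun x b ≤ φ.toFun x a := by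
    intro x a b hx ha hab
    rcases eq_or_lt_of_le hab with h | h
    · rw [h]
    · exact (φ.strictAnti_right x hx ha (ha.trans h) h).le
  have hchain : φ.toFun rK rL ≤ φ.toFun mK mL :=
    le_trans (antiL hmKpos hmKrK hrLpos) (antiR hmKpos hmLpos hmLrL)
  have hmain : φ.toFun rK rL ≤ 1 := le_trans hchain hJ1
  refine ⟨hmain, fun hsc => ⟨?_, ?_⟩⟩
  · -- equality implies similar chord
    intro heq
    have h1 : φ.toFun mK mL = 1 := le_antisymm hJ1 (heq.le.trans hchain)
    have hstrict := (hsc.subset hRsubQ hRconv).ae_eq_const_or_map_average_lt hΦcontR hRclosed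
      (Filter.Eventually.of_forall hfR) hfint hΦfint
    rcases hstrict with hconst | hlt
    · have h2 : f =ᵐ[ν] Function.const _ (mK, mL) := by rwa [hpairavg] at hconst
      have hae : f =ᵐ[μ] Function.const _ (mK, mL) := by
        rw [hνdef] at h2
        have h3 := (ae_withDensity_iff (hwmeas.coe_nnreal_ennreal)).mp h2
        refine h3.mono fun u hu => hu ?_
        simp only [ne_eq, ENNReal.coe_eq_zero, Real.toNNReal_eq_zero, not_le]
        exact hwpos u
      have hfeq : f = Function.const _ (mK, mL) :=
        (Continuous.ae_eq_iff_eq μ hfc continuous_const).mp hae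
      refine ⟨mK / mL, div_pos hmKpos hmLpos, fun u => ?_⟩
      have h3 := congrFun hfeq u
      have h4 : f1 u = mK := congrArg Prod.fst h3
      have h5 : f2 u = mL := congrArg Prod.snd h3
      have hKu : K.chord u = mK * M.chord u := (div_eq_iff (hchordpos M u).ne').1 h4
      have hLu : L.chord u = mL * M.chord u := (div_eq_iff (hchordpos M u).ne').1 h5
      rw [hKu, hLu]
      field_simp
    · rw [hpairavg] at hlt
      rw [havgΦ] at hlt
      exact absurd h1 (ne_of_lt hlt)
  · -- similar chord implies equality
    rintro ⟨lam, hlam, hKL⟩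
    have hMt : ∀ u, φ.toFun (lam * f2 u) (f2 u) = 1 := by
      intro u
      have h := hM u
      rw [hKL u, mul_div_assoc] at h
      exact h
    have hstrictray : ∀ s t : ℝ, 0 < s → s < t →
        φ.toFun (lam * t) t < φ.toFun (lam * s) s := by
      intro s t hs hst
      have ht : 0 < t := hs.trans hst
      have h1 : φ.toFun (lam * t) t < φ.toFun (lam * s) t :=
        φ.strictAnti_left t ht (mul_pos hlam hs) (mul_pos hlam ht)
          (mul_lt_mul_of_pos_left hst hlam)
      have h2 : φ.toFun (lam * s) t < φ.toFun (lam * s) s :=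
        φ.strictAnti_right (lam * s) (mul_pos hlam hs) hs ht hst
      linarith
    obtain ⟨u0⟩ := (inferInstance : Nonempty (sphere (0 : EuclideanSpace ℝ (Fin n)) 1))
    have hβpos : 0 < f2 u0 := hf2pos u0
    have hconstf : ∀ u, f2 u = f2 u0 := by
      intro u
      by_contra hne
      rcases lt_or_gt_of_ne hne with h | h
      · have hx := hstrictray (f2 u) (f2 u0) (hf2pos u) h
        rw [hMt u, hMt u0] at hx; exact lt_irrefl _ hx
      · have hx := hstrictray (f2 u0) (f2 u) hβpos h
        rw [hMt u, hMt u0] at hx; exact lt_irrefl _ hx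
    have hLM : ∀ u, L.chord u = f2 u0 * M.chord u := fun u =>
      (div_eq_iff (hchordpos M u).ne').1 (hconstf u)
    have hαpos : 0 < lam * f2 u0 := mul_pos hlam hβpos
    have hKM : ∀ u, K.chord u = (lam * f2 u0) * M.chord u := by
      intro u; rw [hKL u, hLM u]; ring
    have hIKeq : IK = (lam * f2 u0) ^ p * IM := by
      rw [hIKdef, hIMdef, ← integral_const_mul]
      congr 1; funext u
      rw [hKM u, Real.mul_rpow hαpos.le (hchordpos M u).le]
    have hILeq : IL = (f2 u0) ^ p * IM := by
      rw [hILdef, hIMdef, ← integral_const_mul]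
      congr 1; funext u
      rw [hLM u, Real.mul_rpow hβpos.le (hchordpos M u).le]
    have hrKα : rK = lam * f2 u0 := by
      rw [hrKdef, hIKeq, mul_div_assoc, div_self hIMpos.ne', mul_one, one_div,
        Real.rpow_rpow_inv hαpos.le hp0.ne']
    have hrLβ : rL = f2 u0 := by
      rw [hrLdef, hILeq, mul_div_assoc, div_self hIMpos.ne', mul_one, one_div,
        Real.rpow_rpow_inv hβpos.le hp0.ne']
    rw [hrKα, hrLβ]
    exact (hMt u0).symm
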